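/- Assume the block-cardinality data structure keeps the k blocks sorted in ascending order of cardinality in array A. Then for an incoming node v, either the block at position 1 of A (the block of minimum cardinality) belongs to S_2 (the blocks with no incident uncut nets of v) and its index solves argmax over S_2 of the FREIGHT score (equivalently argmin of cardinality over S_2), or it belongs to S_1, in which case any solution of the restricted maximization over S_1 also solves the global maximization over S_1 ∪ S_2. -/
import Mathlib


/-- With the blocks kept sorted by cardinality, the block `d` of minimum
cardinality either lies in `S₂` (no incident relevant nets of `v`), in which
case it maximizes the FREIGHT score over `S₂`, or it lies in `S₁`, in which
case any maximizer of the FREIGHT score over `S₁` is a global maximizer. -/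
theorem stmt_10 {k : ℕ} (I : Fin k → ℕ) (cardb : Fin k → ℝ)
    (hcard : ∀ i, 0 ≤ cardb i) (α γ : ℝ) (hα : 0 < α) (hγ : 1 < γ)
    (score : Fin k → ℝ)
    (hscore : ∀ i, score i = (I i : ℝ) - α * γ * cardb i ^ (γ - 1))
    (d : Fin k) (hd : ∀ i, cardb d ≤ cardb i) :
    (I d = 0 ∧ ∀ i, I i = 0 → score i ≤ score d) ∨
    (0 < I d ∧ ∀ j, 0 < I j →
      (∀ i, 0 < I i → score i ≤ score j) → ∀ i, score i ≤ score j) := by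
  have hpow : ∀ i, cardb d ^ (γ - 1) ≤ cardb i ^ (γ - 1) := fun i =>
    Real.rpow_le_rpow (hcard d) (hd i) (by linarith)
  have hmul : ∀ i, α * γ * cardb d ^ (γ - 1) ≤ α * γ * cardb i ^ (γ - 1) := fun i =>
    mul_le_mul_of_nonneg_left (hpow i) (by positivity)
  rcases Nat.eq_zero_or_pos (I d) with h0 | h0
  · left
    refine ⟨h0, fun i hi => ?_⟩
    rw [hscore i, hscore d, hi, h0]
    push_cast
    linarith [hmul i]
  · right
    refine ⟨h0, fun j hj hmax i => ?_⟩
    rcases Nat.eq_zero_or_pos (I i) with hi | hi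
    · have hdj := hmax d h0
      have : score i ≤ score d := by
        rw [hscore i, hscore d, hi]
        push_cast
        have : (1:ℝ) ≤ I d := by exact_mod_cast h0
        linarith [hmul i]
      linarith
    · exact hmax i hi
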